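/- Let G be a finite purely non-abelian group, let w ∈ Hom(G, Z(G)), let p: Ẑ(G) → Z(G) be a group homomorphism, and let r: G → Ĝ be a bicharacter. Then there exists a central automorphism δ ∈ Aut_c(G) satisfying δ(x) = x · w(x) · p( ρ( r(x) ∘ δ⁻¹ ) ) for all x ∈ G (i.e. δ = 1 + w + p(δ⁻¹)*r in the convolution notation, with implicit restrictions of characters to the center given by ρ). -/

import Mathlib

/-- A finite group `G` is purely non-abelian if it has no nontrivial abelian direct
factor: whenever `G` is the internal direct product of two normal subgroups `A` and `B`
with `A` abelian, `A` is trivial. -/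
def PurelyNonAbelian (G : Type*) [Group G] : Prop :=
  ∀ A B : Subgroup G, A.Normal → B.Normal → IsCompl A B →
    (∀ a b : A, a * b = b * a) → A = ⊥

open scoped IsMulCommutative

namespace ExistsCentralAutAux

variable {G : Type*} [Group G]

/-- Helper: in a commutative group, from `a * b⁻¹ = c * d⁻¹` deduce `a * c⁻¹ = b * d⁻¹`. -/
lemma quarter {A : Type*} [CommGroup A] {a b c d : A} (h : a * b⁻¹ = c * d⁻¹) :
    a * c⁻¹ = b * d⁻¹ := by
  have h2 : a * d = c * b := by
    have := congrArg (fun t => t * (b * d)) h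
    simpa [mul_assoc, mul_comm, mul_left_comm] using this
  have := congrArg (fun t => t * (c⁻¹ * d⁻¹)) h2
  simpa [mul_assoc, mul_comm, mul_left_comm] using this

/-- Any idempotent endomorphism with central values of a purely non-abelian group is
trivial. -/
lemma eq_one_of_idempotent (hG : PurelyNonAbelian G) (e : G →* G)
    (hc : ∀ x, e x ∈ Subgroup.center G) (hi : ∀ x, e (e x) = e x) : ∀ x, e x = 1 := by
  have hnormA : e.range.Normal := by
    constructor
    intro n hn g
    obtain ⟨y, rfl⟩ := hn
    have hcomm := Subgroup.mem_center_iff.mp (hc y) g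
    have : g * e y * g⁻¹ = e y := by rw [hcomm, mul_inv_cancel_right]
    rw [this]
    exact ⟨y, rfl⟩
  have hcompl : IsCompl e.range e.ker := by
    constructor
    · rw [Subgroup.disjoint_def]
      rintro x ⟨y, rfl⟩ hker
      have h1 : e (e y) = 1 := hker
      rwa [hi y] at h1
    · rw [codisjoint_iff, eq_top_iff]
      intro x _
      have hx : x = e x * ((e x)⁻¹ * x) := by group
      rw [hx]
      refine Subgroup.mul_mem_sup ⟨x, rfl⟩ ?_
      have : e ((e x)⁻¹ * x) = 1 := by
        rw [map_mul, map_inv, hi]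
        group
      exact this
  have hcomm : ∀ a b : e.range, a * b = b * a := by
    rintro ⟨a, y, rfl⟩ ⟨b, y', rfl⟩
    apply Subtype.ext
    exact Subgroup.mem_center_iff.mp (hc y') (e y)
  have hbot := hG e.range e.ker hnormA e.normal_ker hcompl hcomm
  intro x
  have hxr : e x ∈ e.range := ⟨x, rfl⟩
  rw [hbot] at hxr
  simpa using hxr

variable [Finite G]

/-- For any homomorphism `g : G →* Z(G)`, the endomorphism `x ↦ ↑(g x)` of a purely
non-abelian finite group is iterate-nilpotent. -/
lemma exists_iterate_eq_one (hG : PurelyNonAbelian G) (g : G →* Subgroup.center G) :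
    ∃ N : ℕ, 0 < N ∧ ∀ x : G, (fun y : G => ((g y : G)))^[N] x = 1 := by
  set v : G → G := fun y => ((g y : G)) with hv
  have hvmul : ∀ n, ∀ x y : G, v^[n] (x * y) = v^[n] x * v^[n] y := by
    intro n
    induction n with
    | zero => simp
    | succ n ih =>
      intro x y
      rw [Function.iterate_succ_apply', Function.iterate_succ_apply',
        Function.iterate_succ_apply', ih]
      show ((g _ : G)) = _
      rw [map_mul]
      push_cast
      rfl
  have main : ∀ i j : ℕ, i < j → v^[i] = v^[j] →
      ∃ N : ℕ, 0 < N ∧ ∀ x : G, v^[N] x = 1 := by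
    intro i j hlt hij
    set k := j - i with hkdef
    have hk : 0 < k := by omega
    have hjk : j = i + k := by omega
    have onestep : ∀ t (x : G), v^[i + k + t] x = v^[i + t] x := by
      intro t x
      rw [show i + k + t = j + t by omega, Function.iterate_add_apply, ← hij,
        ← Function.iterate_add_apply]
    have multi : ∀ m t (x : G), v^[i + m * k + t] x = v^[i + t] x := by
      intro m
      induction m with
      | zero => simp
      | succ n ih =>
        intro t x
        have h1 : i + (n + 1) * k + t = i + k + (n * k + t) := by ring
        rw [h1, onestep (n * k + t) x, show i + (n * k + t) = i + n * k + t by ring, ih]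
    set N := k * (i + 1) with hNdef
    have hNpos : 0 < N := Nat.mul_pos hk (Nat.succ_pos i)
    have hNi : i + 1 ≤ N := Nat.le_mul_of_pos_left _ hk
    set t := N - i with htdef
    have ht : N = i + t := by omega
    have hik : i + (i + 1) * k = N + i := by
      have : (i + 1) * k = N := by rw [hNdef, mul_comm]
      omega
    have hidem : ∀ y : G, v^[N] (v^[N] y) = v^[N] y := by
      intro y
      rw [← Function.iterate_add_apply]
      have h2 : N + N = i + (i + 1) * k + t := by omega
      rw [h2, multi (i + 1) t y, ← ht]
    have hcent : ∀ y : G, v^[N] y ∈ Subgroup.center G := by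
      intro y
      rw [show N = 1 + (N - 1) by omega, Function.iterate_add_apply]
      exact SetLike.coe_mem _
    refine ⟨N, hNpos, ?_⟩
    exact eq_one_of_idempotent hG (MonoidHom.mk' (v^[N]) (hvmul N)) hcent hidem
  obtain ⟨i, j, hne, hij⟩ := Finite.exists_ne_map_eq_of_infinite (fun n : ℕ => v^[n])
  rcases hne.lt_or_gt with h | h
  · exact main i j h hij
  · exact main j i h hij.symm

/-- The central endomorphism `x ↦ x * f x` associated to `f : G →* Z(G)`. -/
def phiHom (f : G →* Subgroup.center G) : G →* G :=
  MonoidHom.mk' (fun x => x * ((f x : G))) (by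
    intro a b
    have hcomm := Subgroup.mem_center_iff.mp (f a).2 b
    show a * b * ((f (a * b) : G)) = (a * ((f a : G))) * (b * ((f b : G)))
    rw [map_mul]
    push_cast
    rw [mul_assoc a b, ← mul_assoc b, hcomm]
    simp [mul_assoc])

lemma phiHom_bijective (hG : PurelyNonAbelian G) (f : G →* Subgroup.center G) :
    Function.Bijective (phiHom f) := by
  have hinj : Function.Injective (phiHom f) := by
    rw [injective_iff_map_eq_one]
    intro x hx
    have hxx : ((f x : G)) = x⁻¹ := by
      have : x * ((f x : G)) = 1 := hx
      exact eq_inv_of_mul_eq_one_left (by rwa [Subgroup.mem_center_iff.mp (f x).2 x] at this)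
    obtain ⟨N, hN, htriv⟩ := exists_iterate_eq_one hG f
    set v : G → G := fun y => ((f y : G)) with hv
    have key : ∀ m, v^[m] x = x ∨ v^[m] x = x⁻¹ := by
      intro m
      induction m with
      | zero => left; simp
      | succ n ih =>
        rw [Function.iterate_succ_apply']
        rcases ih with h | h
        · right; rw [h]; exact hxx
        · left
          rw [h]
          show ((f x⁻¹ : G)) = x
          rw [map_inv]
          push_cast
          rw [hxx, inv_inv]
    rcases key N with h | h
    · rw [htriv x] at h; exact h.symm
    · rw [htriv x] at h
      rw [← inv_inv x, ← h, inv_one]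
  exact ⟨hinj, Finite.injective_iff_surjective.mp hinj⟩

/-- The central automorphism `x ↦ x * f x`. -/
noncomputable def deltaAut (hG : PurelyNonAbelian G) (f : G →* Subgroup.center G) :
    MulAut G :=
  MulEquiv.ofBijective (phiHom f) (phiHom_bijective hG f)

lemma deltaAut_apply (hG : PurelyNonAbelian G) (f : G →* Subgroup.center G) (x : G) :
    deltaAut hG f x = x * ((f x : G)) := rfl

lemma deltaAut_symm_spec (hG : PurelyNonAbelian G) (f : G →* Subgroup.center G) (y : G) :
    (deltaAut hG f).symm y = y * ((f ((deltaAut hG f).symm y) : G))⁻¹ := by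
  have h := (deltaAut hG f).apply_symm_apply y
  rw [deltaAut_apply] at h
  exact eq_mul_inv_of_mul_eq h

/-- Evaluation into the double character group (w.r.t. `ℂˣ`) of a finite commutative
group is surjective. -/
lemma ev_surj (A : Type*) [CommGroup A] [Finite A] (F : (A →* ℂˣ) →* ℂˣ) :
    ∃ a : A, ∀ φ : A →* ℂˣ, φ a = F φ := by
  haveI h1 : NeZero ((Monoid.exponent A : ℕ) : ℂ) :=
    ⟨Nat.cast_ne_zero.mpr Monoid.exponent_ne_zero_of_finite⟩
  obtain ⟨e1⟩ := CommGroup.monoidHom_mulEquiv_of_hasEnoughRootsOfUnity A ℂ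
  haveI : Finite (A →* ℂˣ) := Finite.of_equiv A e1.symm.toEquiv
  haveI h2 : NeZero ((Monoid.exponent (A →* ℂˣ) : ℕ) : ℂ) :=
    ⟨Nat.cast_ne_zero.mpr (Monoid.exponent_ne_zero_of_finite (G := A →* ℂˣ))⟩
  obtain ⟨e2⟩ := CommGroup.monoidHom_mulEquiv_of_hasEnoughRootsOfUnity (A →* ℂˣ) ℂ
  have hinj : Function.Injective (MonoidHom.eval (M := A) (N := ℂˣ)) := by
    rw [injective_iff_map_eq_one]
    intro a ha
    by_contra hne
    obtain ⟨φ, hφ⟩ := CommGroup.exists_apply_ne_one_of_hasEnoughRootsOfUnity A ℂ hne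
    have := congrFun (congrArg DFunLike.coe ha) φ
    simp only [MonoidHom.one_apply] at this
    exact hφ (by simpa using this)
  have hsurj : Function.Surjective (MonoidHom.eval (M := A) (N := ℂˣ)) := by
    have e : A ≃ ((A →* ℂˣ) →* ℂˣ) := e1.toEquiv.symm.trans e2.toEquiv.symm
    exact (Finite.injective_iff_surjective_of_equiv e).mp hinj
  obtain ⟨a, ha⟩ := hsurj F
  exact ⟨a, fun φ => by rw [← ha]; rfl⟩

section Main

variable (hG : PurelyNonAbelian G) (p : (Subgroup.center G →* ℂˣ) →* Subgroup.center G)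
  (r : G →* (G →* ℂˣ))

/-- The twisted character map `x ↦ ρ((r x) ∘ δ_f⁻¹)`. -/
noncomputable def twistHom (f : G →* Subgroup.center G) :
    G →* (Subgroup.center G →* ℂˣ) where
  toFun x := ((r x).comp (deltaAut hG f).symm.toMonoidHom).comp (Subgroup.center G).subtype
  map_one' := by ext z; simp
  map_mul' a b := by
    ext z
    simp [MonoidHom.comp_apply, MonoidHom.mul_apply]

lemma twistHom_apply (f : G →* Subgroup.center G) (x : G) (z : Subgroup.center G) :
    twistHom hG r f x z = r x ((deltaAut hG f).symm ((z : G))) := rfl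

/-- The twisted Adney–Yen map on `Hom(G, Z(G))`. -/
noncomputable def Smap (f : G →* Subgroup.center G) : G →* Subgroup.center G :=
  f * (p.comp (twistHom hG r f))⁻¹

lemma Smap_injective : Function.Injective (Smap hG p r) := by
  intro f₁ f₂ hS
  set ι := (Subgroup.center G).subtype with hι
  set δ₁ := deltaAut hG f₁ with hδ₁
  set δ₂ := deltaAut hG f₂ with hδ₂
  set g₁ : G →* Subgroup.center G := (f₁.comp δ₁.symm.toMonoidHom)⁻¹ with hg₁
  set g₂ : G →* Subgroup.center G := (f₂.comp δ₂.symm.toMonoidHom)⁻¹ with hg₂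
  set γ : Subgroup.center G →* Subgroup.center G := (g₁.comp ι) * (g₂.comp ι)⁻¹ with hγ
  have ha₁ : ∀ y : G, δ₁.symm y = y * ((g₁ y : G)) := by
    intro y
    have h := deltaAut_symm_spec hG f₁ y
    have hg : ((g₁ y : G)) = ((f₁ (δ₁.symm y) : G))⁻¹ := by
      simp [hg₁]
    rw [hg]
    exact h
  have ha₂ : ∀ y : G, δ₂.symm y = y * ((g₂ y : G)) := by
    intro y
    have h := deltaAut_symm_spec hG f₂ y
    have hg : ((g₂ y : G)) = ((f₂ (δ₂.symm y) : G))⁻¹ := by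
      simp [hg₂]
    rw [hg]
    exact h
  have hγapp : ∀ z : Subgroup.center G, γ z = g₁ ((z : G)) * (g₂ ((z : G)))⁻¹ := by
    intro z
    rfl
  have hb' : ∀ z : Subgroup.center G,
      δ₁.symm ((z : G)) = ((γ z : G)) * δ₂.symm ((z : G)) := by
    intro z
    have hz := Subgroup.mem_center_iff.mp z.2
    have hγc : ((γ z : G)) = ((g₁ ((z : G)) : G)) * ((g₂ ((z : G)) : G))⁻¹ := by
      rw [hγapp]
      push_cast
      rfl
    rw [ha₁, ha₂, hγc]
    calc ((z : G)) * ((g₁ ((z : G)) : G))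
        = ((g₁ ((z : G)) : G)) * ((z : G)) := (hz _).symm
      _ = ((g₁ ((z : G)) : G)) * (((g₂ ((z : G)) : G))⁻¹ * (((g₂ ((z : G)) : G)) * ((z : G)))) := by
          rw [inv_mul_cancel_left]
      _ = ((g₁ ((z : G)) : G)) * ((g₂ ((z : G)) : G))⁻¹ * (((z : G)) * ((g₂ ((z : G)) : G))) := by
          rw [← mul_assoc, hz _]
  have hc : ∀ x : G, f₁ x * (f₂ x)⁻¹ = p ((r x).comp (ι.comp γ)) := by
    intro x
    have hx' : f₁ x * (p (twistHom hG r f₁ x))⁻¹ = f₂ x * (p (twistHom hG r f₂ x))⁻¹ :=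
      congrFun (congrArg DFunLike.coe hS) x
    have hq := quarter hx'
    rw [hq, ← map_inv, ← map_mul]
    congr 1
    ext z
    simp only [MonoidHom.mul_apply, MonoidHom.inv_apply, MonoidHom.comp_apply]
    rw [twistHom_apply, twistHom_apply, hb' z, map_mul, mul_inv_cancel_right]
    rfl
  -- the key endomorphisms
  have hmemsymm : ∀ z : Subgroup.center G, δ₁.symm ((z : G)) ∈ Subgroup.center G := by
    intro z
    rw [Subgroup.mem_center_iff]
    intro g
    apply δ₁.injective
    rw [map_mul, map_mul, δ₁.apply_symm_apply]
    exact Subgroup.mem_center_iff.mp z.2 (δ₁ g)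
  set ψ : Subgroup.center G →* Subgroup.center G :=
    MonoidHom.mk' (fun z => ⟨δ₁.symm ((z : G)), hmemsymm z⟩)
      (fun a b => by
        apply Subtype.ext
        push_cast
        rw [map_mul]) with hψ
  have hψax : ∀ ζ : Subgroup.center G, ψ (ζ * f₁ ((ζ : G))) = ζ := by
    intro ζ
    apply Subtype.ext
    show δ₁.symm ((↑(ζ * f₁ ((ζ : G))) : G)) = (ζ : G)
    have hcoe : ((↑(ζ * f₁ ((ζ : G))) : G)) = δ₁ ((ζ : G)) := by
      rw [hδ₁, deltaAut_apply]
      push_cast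
      rfl
    rw [hcoe, δ₁.symm_apply_apply]
  set s : Subgroup.center G →* (G →* ℂˣ) := (r.comp δ₂.symm.toMonoidHom).comp ι with hs
  set cc : (Subgroup.center G →* ℂˣ) →* Subgroup.center G := (ψ.comp p)⁻¹ with hcc
  set Xc : Subgroup.center G → (Subgroup.center G →* ℂˣ) :=
    fun z => (s z).comp (ι.comp γ) with hXc
  have hccapp : ∀ φ, cc φ = (ψ (p φ))⁻¹ := by
    intro φ
    simp [hcc, MonoidHom.inv_apply]
  have hR : ∀ z : Subgroup.center G, γ z = cc (Xc z) := by
    intro z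
    have key : γ z * f₁ ((γ z : G)) = (p (Xc z))⁻¹ := by
      have h1 : γ z = (f₁ (δ₁.symm ((z : G))))⁻¹ * f₂ (δ₂.symm ((z : G))) := by
        rw [hγapp]
        have e1 : g₁ ((z : G)) = (f₁ (δ₁.symm ((z : G))))⁻¹ := by simp [hg₁]
        have e2 : (g₂ ((z : G)))⁻¹ = f₂ (δ₂.symm ((z : G))) := by simp [hg₂]
        rw [e1, e2]
      have h2 : f₁ (δ₁.symm ((z : G))) = f₁ ((γ z : G)) * f₁ (δ₂.symm ((z : G))) := by
        rw [hb' z, map_mul]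
      have h3 := hc (δ₂.symm ((z : G)))
      have hXeq : (r (δ₂.symm ((z : G)))).comp (ι.comp γ) = Xc z := rfl
      rw [hXeq] at h3
      set a := f₁ ((γ z : G)) with ha
      rw [h1, ← h3]
      rw [h2]
      simp [mul_comm, mul_left_comm, mul_assoc, mul_inv_rev]
    calc γ z = ψ (γ z * f₁ ((γ z : G))) := (hψax (γ z)).symm
      _ = ψ ((p (Xc z))⁻¹) := by rw [key]
      _ = cc (Xc z) := by rw [map_inv, hccapp]
  set gL : G →* Subgroup.center G := cc.comp s.flip with hgL
  have hrec : ∀ z : Subgroup.center G, ∃ ζ, γ z = gL ((γ ζ : G)) := by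
    intro z
    obtain ⟨z₀, hz₀⟩ := ev_surj (Subgroup.center G) ((s z).comp (ι.comp cc))
    refine ⟨z₀, ?_⟩
    have hX : Xc z = s.flip ((γ z₀ : G)) := by
      apply MonoidHom.ext
      intro z'
      show (s z) (ι (γ z')) = _
      rw [hR z']
      exact (hz₀ (Xc z')).symm
    rw [hR z, hX]
    rfl
  obtain ⟨N, hNpos, hNtriv⟩ := exists_iterate_eq_one hG gL
  set v : G → G := fun y => ((gL y : G)) with hv
  have hiter : ∀ k, ∀ z : Subgroup.center G, ∃ ζ, γ z = gL (v^[k] ((γ ζ : G))) := by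
    intro k
    induction k with
    | zero =>
      intro z
      obtain ⟨ζ, hζ⟩ := hrec z
      exact ⟨ζ, by simpa using hζ⟩
    | succ n ih =>
      intro z
      obtain ⟨ζ, hζ⟩ := ih z
      obtain ⟨ζ', hζ'⟩ := hrec ζ
      refine ⟨ζ', ?_⟩
      rw [hζ, hζ', Function.iterate_succ_apply]
  have hγtriv : ∀ z, γ z = 1 := by
    intro z
    obtain ⟨ζ, hζ⟩ := hiter N z
    rw [hNtriv _] at hζ
    simpa using hζ
  ext x
  have h := hc x
  have hchar : (r x).comp (ι.comp γ) = 1 := by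
    ext z
    rw [MonoidHom.comp_apply, MonoidHom.comp_apply, hγtriv z]
    simp
  rw [hchar, map_one] at h
  have := mul_inv_eq_one.mp h
  rw [this]

end Main

end ExistsCentralAutAux

/-- If `G` is finite purely non-abelian, `w ∈ Hom(G, Z(G))`, `p : Ẑ(G) → Z(G)` a
homomorphism and `r : G → Ĝ` a bicharacter, then there is a central automorphism `δ`
satisfying `δ(x) = x · w(x) · p(ρ(r(x) ∘ δ⁻¹))` for all `x`. -/
theorem exists_central_aut_with_twist (G : Type*) [Group G] [Finite G]
    (hG : PurelyNonAbelian G)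
    (w : G →* Subgroup.center G)
    (p : (Subgroup.center G →* ℂˣ) →* Subgroup.center G)
    (r : G →* (G →* ℂˣ)) :
    ∃ δ : MulAut G, (∀ g : G, δ g * g⁻¹ ∈ Subgroup.center G) ∧
      ∀ x : G, δ x = x * (w x : G) *
        (p (((r x).comp δ.symm.toMonoidHom).comp (Subgroup.center G).subtype) : G) := by
  haveI : Finite (G →* Subgroup.center G) :=
    Finite.of_injective (fun f => (f : G → Subgroup.center G)) DFunLike.coe_injective
  obtain ⟨f, hf⟩ := Finite.injective_iff_surjective.mp
    (ExistsCentralAutAux.Smap_injective hG p r) w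
  refine ⟨ExistsCentralAutAux.deltaAut hG f, ?_, ?_⟩
  · intro g
    rw [ExistsCentralAutAux.deltaAut_apply]
    have hcomm := Subgroup.mem_center_iff.mp (f g).2 g
    have hg : g * ((f g : G)) * g⁻¹ = ((f g : G)) := by
      rw [hcomm, mul_inv_cancel_right]
    rw [hg]
    exact (f g).2
  · intro x
    have hx : f x * (p (ExistsCentralAutAux.twistHom hG r f x))⁻¹ = w x :=
      congrFun (congrArg DFunLike.coe hf) x
    have hfx : f x = w x * p (ExistsCentralAutAux.twistHom hG r f x) :=
      mul_inv_eq_iff_eq_mul.mp hx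
    rw [ExistsCentralAutAux.deltaAut_apply, hfx]
    push_cast
    rw [← mul_assoc]
    rfl
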